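/- Let G be a cyclic group of order p acting on M = ℤ_p[X]/(1 + X + ⋯ + X^{p−1}) via a generator acting as multiplication by the class of X. Then the first group cohomology H^1(G, M) is isomorphic to ℤ/pℤ. -/
import Mathlib

open Polynomial
set_option maxHeartbeats 1000000

/-- The module `M = ℤ_p[X]/(1 + X + ⋯ + X^{p−1})`. -/
abbrev CycloMod (p : ℕ) [Fact p.Prime] : Type :=
  ℤ_[p][X] ⧸ Ideal.span {(∑ i ∈ Finset.range p, X ^ i : ℤ_[p][X])}

/-- The action of the generator `σ` of the cyclic group of order `p` on `M`:
multiplication by the class of `X`. -/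
noncomputable def cycloSigma (p : ℕ) [Fact p.Prime] : Module.End ℤ_[p] (CycloMod p) :=
  LinearMap.mulLeft ℤ_[p]
    (Ideal.Quotient.mk (Ideal.span {(∑ i ∈ Finset.range p, X ^ i : ℤ_[p][X])}) X)

/-- The norm element `1 + σ + ⋯ + σ^{p−1}` acting on `M`. -/
noncomputable def cycloNorm (p : ℕ) [Fact p.Prime] : Module.End ℤ_[p] (CycloMod p) :=
  ∑ i ∈ Finset.range p, cycloSigma p ^ i

section Aux

variable (p : ℕ) [Fact p.Prime]

/-- Evaluation at 1 composed with reduction mod p. -/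
noncomputable def cycloPsi : ℤ_[p][X] →+* ZMod p :=
  (PadicInt.toZMod).comp (Polynomial.evalRingHom 1)

lemma cycloPsi_surjective : Function.Surjective (cycloPsi p) := by
  intro z
  refine ⟨Polynomial.C ((z.val : ℤ_[p])), ?_⟩
  simp [cycloPsi, map_natCast]

lemma cycloNorm_eq_zero : cycloNorm p = 0 := by
  have h0 : (∑ i ∈ Finset.range p, Ideal.Quotient.mk
      (Ideal.span {(∑ i ∈ Finset.range p, X ^ i : ℤ_[p][X])}) X ^ i) = 0 := by
    simp only [← map_pow, ← map_sum]
    exact Ideal.Quotient.eq_zero_iff_mem.mpr (Ideal.subset_span rfl)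
  refine LinearMap.ext fun m => ?_
  have : cycloNorm p m = (∑ i ∈ Finset.range p, Ideal.Quotient.mk
      (Ideal.span {(∑ i ∈ Finset.range p, X ^ i : ℤ_[p][X])}) X ^ i) * m := by
    rw [cycloNorm, LinearMap.sum_apply, Finset.sum_mul]
    refine Finset.sum_congr rfl fun i _ => ?_
    rw [cycloSigma, LinearMap.pow_mulLeft, LinearMap.mulLeft_apply]
  simp [this, h0]

lemma ker_cycloPsi : RingHom.ker (cycloPsi p) =
    Ideal.span {(∑ i ∈ Finset.range p, X ^ i : ℤ_[p][X])} ⊔ Ideal.span {X - 1} := by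
  have hΦ : Polynomial.eval 1 (∑ i ∈ Finset.range p, X ^ i : ℤ_[p][X]) = (p : ℤ_[p]) := by
    simp
  apply le_antisymm
  · intro f hf
    have hf' : PadicInt.toZMod (Polynomial.eval 1 f) = 0 := hf
    have h1 : Polynomial.eval 1 f ∈ Ideal.span {(p : ℤ_[p])} := by
      have := PadicInt.ker_toZMod (p := p)
      have hm : Polynomial.eval 1 f ∈ RingHom.ker (PadicInt.toZMod : ℤ_[p] →+* ZMod p) := hf'
      rw [this, PadicInt.maximalIdeal_eq_span_p] at hm
      exact hm
    obtain ⟨u, hu⟩ := Ideal.mem_span_singleton.mp h1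
    -- f = (f - C (eval 1 f)) + C p * C u
    have hdvd : (X - 1 : ℤ_[p][X]) ∣ f - Polynomial.C (Polynomial.eval 1 f) := by
      have := Polynomial.X_sub_C_dvd_sub_C_eval (a := (1 : ℤ_[p])) (p := f)
      rwa [map_one] at this
    have hCp : (Polynomial.C (p : ℤ_[p]) : ℤ_[p][X]) ∈
        Ideal.span {(∑ i ∈ Finset.range p, X ^ i : ℤ_[p][X])} ⊔ Ideal.span {X - 1} := by
      have hdvd2 : (X - 1 : ℤ_[p][X]) ∣
          (∑ i ∈ Finset.range p, X ^ i) - Polynomial.C (p : ℤ_[p]) := by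
        have := Polynomial.X_sub_C_dvd_sub_C_eval (a := (1 : ℤ_[p]))
          (p := (∑ i ∈ Finset.range p, X ^ i : ℤ_[p][X]))
        rw [hΦ, map_one] at this
        exact this
      have : (Polynomial.C (p : ℤ_[p]) : ℤ_[p][X]) =
          (∑ i ∈ Finset.range p, X ^ i) - ((∑ i ∈ Finset.range p, X ^ i) -
            Polynomial.C (p : ℤ_[p])) := by ring
      rw [this]
      refine sub_mem (Ideal.mem_sup_left (Ideal.subset_span rfl)) (Ideal.mem_sup_right ?_)
      exact Ideal.mem_span_singleton.mpr hdvd2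
    have : f = (f - Polynomial.C (Polynomial.eval 1 f)) +
        Polynomial.C (p : ℤ_[p]) * Polynomial.C u := by
      rw [← Polynomial.C_mul, ← hu]; ring
    rw [this]
    refine add_mem (Ideal.mem_sup_right (Ideal.mem_span_singleton.mpr hdvd)) ?_
    exact Ideal.mul_mem_right _ _ hCp
  · rw [sup_le_iff]
    constructor <;> rw [Ideal.span_le, Set.singleton_subset_iff, SetLike.mem_coe,
      RingHom.mem_ker]
    · show PadicInt.toZMod (Polynomial.eval 1 (∑ i ∈ Finset.range p, X ^ i : ℤ_[p][X])) = 0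
      rw [hΦ]; simp
    · show PadicInt.toZMod (Polynomial.eval 1 (X - 1 : ℤ_[p][X])) = 0
      simp

end Aux

/-- For the cyclic group `G` of order `p` acting on `M = ℤ_p[X]/(1 + X + ⋯ + X^{p−1})`
via a generator acting as multiplication by `X`, one has
`H¹(G, M) = ker(Norm)/im(σ−1) ≅ ℤ/pℤ`. -/
theorem H1_cyclotomic_module (p : ℕ) [Fact p.Prime] :
    Nonempty ((↥(LinearMap.ker (cycloNorm p)) ⧸
      Submodule.comap (LinearMap.ker (cycloNorm p)).subtype
        (LinearMap.range (cycloSigma p - 1))) ≃+ ZMod p) := by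
  set I : Ideal ℤ_[p][X] := Ideal.span {(∑ i ∈ Finset.range p, X ^ i : ℤ_[p][X])} with hI
  set K := LinearMap.ker (cycloNorm p) with hKdef
  have hK : K = ⊤ := by rw [hKdef, cycloNorm_eq_zero, LinearMap.ker_zero]
  set R := LinearMap.range (cycloSigma p - 1) with hRdef
  -- step 1: pass from ker quotient to full module quotient
  have hmap : Submodule.map (LinearEquiv.ofTop K hK : K →ₗ[ℤ_[p]] CycloMod p)
      (Submodule.comap K.subtype R) = R := by
    have : (LinearEquiv.ofTop K hK : K →ₗ[ℤ_[p]] CycloMod p) = K.subtype := by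
      ext x; rfl
    rw [this, Submodule.map_comap_subtype, hK]
    simp
  have e1 := Submodule.Quotient.equiv (Submodule.comap K.subtype R) R
    (LinearEquiv.ofTop K hK) hmap
  -- step 2: identify R with the span of (X-1)'s image
  set J : Ideal (CycloMod p) := Ideal.span {Ideal.Quotient.mk I (X - 1)} with hJ
  have hR : R = Submodule.restrictScalars ℤ_[p] J := by
    have hσ : ∀ m : CycloMod p, (cycloSigma p - 1) m = Ideal.Quotient.mk I (X - 1) * m := by
      intro m
      rw [LinearMap.sub_apply, cycloSigma, LinearMap.mulLeft_apply, map_sub, sub_mul,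
        Module.End.one_apply, map_one, one_mul]
    refine SetLike.ext fun x => ?_
    simp only [hRdef, LinearMap.mem_range, Submodule.restrictScalars_mem, hJ,
      Ideal.mem_span_singleton]
    constructor
    · rintro ⟨y, hy⟩; exact ⟨y, by rw [← hy, hσ]⟩
    · rintro ⟨y, hy⟩; exact ⟨y, by rw [hσ, ← hy]⟩
  have e2 : (CycloMod p ⧸ R) ≃ₗ[ℤ_[p]] CycloMod p ⧸ Submodule.restrictScalars ℤ_[p] J :=
    Submodule.quotEquivOfEq _ _ hR
  have e3 : (CycloMod p ⧸ Submodule.restrictScalars ℤ_[p] J) ≃ₗ[ℤ_[p]] CycloMod p ⧸ J :=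
    Submodule.Quotient.restrictScalarsEquiv ℤ_[p] J
  -- step 3: double quotient
  have hJmap : J = Ideal.map (Ideal.Quotient.mk I) (Ideal.span {(X - 1 : ℤ_[p][X])}) := by
    rw [Ideal.map_span, Set.image_singleton]
  have e4 : (CycloMod p ⧸ J) ≃+* ℤ_[p][X] ⧸ (I ⊔ Ideal.span {(X - 1 : ℤ_[p][X])}) := by
    rw [hJmap]
    exact DoubleQuot.quotQuotEquivQuotSup I (Ideal.span {(X - 1 : ℤ_[p][X])})
  have hker : I ⊔ Ideal.span {(X - 1 : ℤ_[p][X])} = RingHom.ker (cycloPsi p) :=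
    (ker_cycloPsi p).symm
  have e5 : (ℤ_[p][X] ⧸ (I ⊔ Ideal.span {(X - 1 : ℤ_[p][X])})) ≃+* ZMod p := by
    rw [hker]
    exact RingHom.quotientKerEquivOfSurjective (cycloPsi_surjective p)
  exact ⟨e1.toAddEquiv.trans <| e2.toAddEquiv.trans <| e3.toAddEquiv.trans <|
    e4.toAddEquiv.trans e5.toAddEquiv⟩
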